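/- Let S be a subset of a real vector space V with |S| strictly less than the continuum, and let L be a one-dimensional linear subspace of V. Then there exists a linear projection P : V → L such that P restricted to S is injective. In particular, S admits an injective monotone map into ℝ. -/

import Mathlib

open Cardinal

universe u

theorem exists_functional {V : Type u} [AddCommGroup V] [Module ℝ V]
    (D : Set V) (hD : #D < Cardinal.continuum) :
    ∃ f : V →ₗ[ℝ] ℝ, ∀ d ∈ D, d ≠ 0 → f d ≠ 0 := by
  classical
  obtain ⟨⟨ι, B⟩⟩ := Module.Free.exists_basis (R := ℝ) (M := V)
  set T : Set ι := ⋃ d ∈ D, ((B.repr d).support : Set ι) with hT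
  have hTcard : #T < continuum := by
    have h1 : #T ≤ #D * ℵ₀ := by
      refine (mk_biUnion_le _ _).trans (mul_le_mul_right (ciSup_le' fun d => ?_) _)
      exact le_of_lt (Set.Finite.lt_aleph0 (Set.finite_coe_iff.mp inferInstance))
    exact h1.trans_lt (mul_lt_of_lt aleph0_le_continuum hD aleph0_lt_continuum)
  set G : Set ℝ := ⋃ d ∈ D, (⇑(B.repr d) '' ((B.repr d).support : Set ι)) with hG
  have hGcard : #G < continuum := by
    have h1 : Cardinal.lift.{u} #G ≤ Cardinal.lift.{0} #D * (ℵ₀ : Cardinal.{u}) := by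
      refine (mk_biUnion_le_lift _ _).trans (mul_le_mul_right (ciSup_le' ?_) _)
      intro d
      exact (Cardinal.lift_le.mpr
        (((B.repr (d : V)).support.finite_toSet.image _).lt_aleph0.le)).trans_eq
        Cardinal.lift_aleph0
    have h2 : Cardinal.lift.{0} #D * (ℵ₀ : Cardinal.{u}) < continuum :=
      mul_lt_of_lt aleph0_le_continuum
        (by rwa [Cardinal.lift_uzero]) aleph0_lt_continuum
    have h3 := h1.trans_lt h2
    rwa [show (continuum : Cardinal.{u}) = Cardinal.lift.{u} (continuum : Cardinal.{0}) from
      (Cardinal.lift_continuum).symm, Cardinal.lift_lt] at h3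
  set K : Subfield ℝ := Subfield.closure G with hK
  have hKcard : #K < continuum :=
    lt_of_le_of_lt (Subfield.cardinalMk_closure_le_max G) (max_lt hGcard aleph0_lt_continuum)
  have hmem : ∀ d ∈ D, ∀ i, B.repr d i ∈ K := by
    intro d hd i
    by_cases hi : i ∈ (B.repr d).support
    · exact Subfield.subset_closure (Set.mem_biUnion hd (Set.mem_image_of_mem _ hi))
    · rw [Finsupp.notMem_support_iff.mp hi]; exact zero_mem K
  have hrank : Module.rank ↥K ℝ = #ℝ := by
    refine Module.Free.rank_eq_mk_of_infinite_lt ↥K ℝ ?_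
    simpa using hKcard.trans_eq mk_real.symm
  have hκcard : #(Module.Free.ChooseBasisIndex ↥K ℝ) = continuum := by
    rw [← Module.Free.rank_eq_card_chooseBasisIndex, hrank, mk_real]
  have hle : Cardinal.lift.{0} #T ≤
      Cardinal.lift.{u} #(Module.Free.ChooseBasisIndex ↥K ℝ) := by
    rw [hκcard, lift_uzero, lift_continuum]
    exact hTcard.le
  obtain ⟨e⟩ := Cardinal.lift_mk_le'.mp hle
  set Bk : Module.Basis (Module.Free.ChooseBasisIndex ↥K ℝ) ↥K ℝ :=
    Module.Free.chooseBasis ↥K ℝ with hBk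
  set c : ι → ℝ := fun i => if h : i ∈ T then (Bk (e ⟨i, h⟩) : ℝ) else 0 with hc
  refine ⟨(Finsupp.linearCombination ℝ c).comp (B.repr : V →ₗ[ℝ] (ι →₀ ℝ)), ?_⟩
  intro d hd hd0 hfd
  simp only [LinearMap.comp_apply, LinearEquiv.coe_coe, Finsupp.linearCombination_apply,
    Finsupp.sum] at hfd
  set s := (B.repr d).support with hs
  have hsupp : ∀ i ∈ s, i ∈ T := fun i hi => Set.mem_biUnion hd hi
  have li : LinearIndependent ↥K (fun j : ↥s => Bk (e ⟨(j : ι), hsupp j j.2⟩)) := by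
    refine Bk.linearIndependent.comp _ ?_
    intro j j' h
    have h2 := e.injective h
    have h4 : (j : ι) = (j' : ι) := congrArg (fun (x : ↥T) => (x : ι)) h2
    exact Subtype.ext h4
  rw [Fintype.linearIndependent_iff] at li
  have hsum : ∑ j : ↥s, (⟨B.repr d (j : ι), hmem d hd (j : ι)⟩ : ↥K) •
      Bk (e ⟨(j : ι), hsupp j j.2⟩) = 0 := by
    have heq : ∀ j : ↥s, (⟨B.repr d (j : ι), hmem d hd (j : ι)⟩ : ↥K) •
        Bk (e ⟨(j : ι), hsupp j j.2⟩) = B.repr d (j : ι) • c (j : ι) := by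
      intro j
      have hcj : c (j : ι) = Bk (e ⟨(j : ι), hsupp j j.2⟩) := by
        rw [hc]; exact dif_pos (hsupp j j.2)
      rw [hcj]; rfl
    calc ∑ j : ↥s, (⟨B.repr d (j : ι), hmem d hd (j : ι)⟩ : ↥K) •
          Bk (e ⟨(j : ι), hsupp j j.2⟩)
        = ∑ j : ↥s, B.repr d (j : ι) • c (j : ι) :=
          Finset.sum_congr rfl (fun j _ => heq j)
      _ = ∑ i ∈ s, B.repr d i • c i := Finset.sum_coe_sort s (fun i => B.repr d i • c i)
      _ = 0 := hfd
  have hall := li _ hsum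
  obtain ⟨i, hi⟩ := Finsupp.support_nonempty_iff.mpr
    (fun h => hd0 (B.repr.map_eq_zero_iff.mp h))
  have h3 := hall ⟨i, hi⟩
  rw [Subtype.ext_iff] at h3
  exact Finsupp.mem_support_iff.mp hi h3

/-- A subset of cardinality < continuum of a real vector space can be
linearly projected onto a given one-dimensional subspace injectively; in particular it
admits an injective monotone map into ℝ. -/
theorem stmt_12 (V : Type*) [AddCommGroup V] [Module ℝ V]
    (S : Set V) (hS : Cardinal.mk S < Cardinal.continuum)
    (L : Submodule ℝ V) (hL : Module.finrank ℝ L = 1) :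
    (∃ P : V →ₗ[ℝ] V, (P ∘ₗ P = P) ∧ LinearMap.range P = L ∧ Set.InjOn P S) ∧
    (∃ g : V → ℝ, Set.InjOn g S ∧
      ∀ a b x : V, a ∈ S → b ∈ S → x ∈ S → x ∈ segment ℝ a b →
        g x ∈ Set.uIcc (g a) (g b)) := by
  classical
  obtain ⟨v, hv0, hvspan⟩ := (finrank_eq_one_iff' (K := ℝ) (V := ↥L)).mp hL
  have hv0' : (v : V) ≠ 0 := fun h => hv0 (Subtype.ext h)
  set D : Set V := ((fun p : V × V => p.1 - p.2) '' (S ×ˢ S)) ∪ {(v : V)} with hD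
  have hDcard : #D < continuum := by
    refine (mk_union_le _ _).trans_lt (add_lt_of_lt aleph0_le_continuum ?_ ?_)
    · refine mk_image_le.trans_lt ?_
      have h1 : #(↥(S ×ˢ S)) = #S * #S := by
        rw [(Equiv.Set.prod S S).cardinal_eq, mk_prod]; simp
      rw [h1]
      exact mul_lt_of_lt aleph0_le_continuum hS hS
    · rw [mk_singleton]
      exact one_lt_aleph0.trans aleph0_lt_continuum
  obtain ⟨f, hf⟩ := exists_functional D hDcard
  have hfv : f (v : V) ≠ 0 := hf _ (Set.mem_union_right _ rfl) hv0'
  have hinj : Set.InjOn f S := by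
    intro a ha b hb hab
    by_contra hne
    exact hf (a - b) (Set.mem_union_left _ ⟨(a, b), ⟨ha, hb⟩, rfl⟩) (sub_ne_zero.mpr hne)
      (by rw [map_sub, hab, sub_self])
  constructor
  · refine ⟨LinearMap.smulRight ((f (v : V))⁻¹ • f) (v : V), ?_, ?_, ?_⟩
    · ext x
      simp only [LinearMap.comp_apply, LinearMap.smulRight_apply, LinearMap.smul_apply,
        smul_eq_mul, map_smul]
      rw [smul_smul]
      congr 1
      field_simp
    · apply le_antisymm
      · rintro _ ⟨x, rfl⟩
        exact L.smul_mem _ v.2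
      · intro w hw
        obtain ⟨c, hc⟩ := hvspan ⟨w, hw⟩
        refine ⟨c • (v : V), ?_⟩
        have hc' : c • (v : V) = w := congrArg Subtype.val hc
        simp only [LinearMap.smulRight_apply, LinearMap.smul_apply, smul_eq_mul, map_smul]
        rw [← hc']
        congr 1
        field_simp
        exact one_smul _ _
    · intro a ha b hb hab
      simp only [LinearMap.smulRight_apply, LinearMap.smul_apply, smul_eq_mul] at hab
      have h2 := smul_left_injective ℝ hv0' hab
      have h3 : f a = f b := mul_left_cancel₀ (inv_ne_zero hfv) h2
      exact hinj ha hb h3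
  · refine ⟨f, hinj, ?_⟩
    intro a b x ha hb hx hseg
    obtain ⟨s, t, hs, ht, hst, rfl⟩ := hseg
    rw [← segment_eq_uIcc]
    exact ⟨s, t, hs, ht, hst, by simp [map_add, map_smul]⟩
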